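/- Conversely, for any A2 > 0, the point with A1 = ((k2/k1)·A2^{q2-q1})^{1/(p1-p2)}, A3 = A2/β, A4 = (k5/k4)·A2, A5 = (k5/k6)·A2 is a positive steady state of the DAC ODE system, assuming p1 ≠ p2 and all rate constants positive. -/

import Mathlib

def DACsteady (k1 k2 k4 k5 k6 am β p1 p2 q1 q2 A1 A2 A3 A4 A5 : ℝ) : Prop :=
  k1 * A1 ^ p1 * A2 ^ q1 - k2 * A1 ^ p2 * A2 ^ q2 = 0 ∧
  k2 * A1 ^ p2 * A2 ^ q2 - k1 * A1 ^ p1 * A2 ^ q1 - am * A2 + am * β * A3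
    + k4 * A4 - k5 * A2 = 0 ∧
  am * A2 - am * β * A3 = 0 ∧
  k6 * A5 - k4 * A4 = 0 ∧
  k5 * A2 - k6 * A5 = 0

theorem stmt11 (k1 k2 k4 k5 k6 am β p1 p2 q1 q2 A2 : ℝ)
    (hk1 : 0 < k1) (hk2 : 0 < k2) (hk4 : 0 < k4) (hk5 : 0 < k5) (hk6 : 0 < k6)
    (ham : 0 < am) (hβ : 0 < β) (hp : p1 ≠ p2) (hA2 : 0 < A2) :
    0 < (k2 / k1 * A2 ^ (q2 - q1)) ^ (1 / (p1 - p2)) ∧ 0 < A2 / β ∧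
    0 < k5 / k4 * A2 ∧ 0 < k5 / k6 * A2 ∧
    DACsteady k1 k2 k4 k5 k6 am β p1 p2 q1 q2
      ((k2 / k1 * A2 ^ (q2 - q1)) ^ (1 / (p1 - p2))) A2 (A2 / β)
      (k5 / k4 * A2) (k5 / k6 * A2) := by
  have hc : 0 < k2 / k1 * A2 ^ (q2 - q1) :=
    mul_pos (div_pos hk2 hk1) (Real.rpow_pos_of_pos hA2 _)
  set A1 : ℝ := (k2 / k1 * A2 ^ (q2 - q1)) ^ (1 / (p1 - p2)) with hA1def
  have hA1 : 0 < A1 := Real.rpow_pos_of_pos hc _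
  have hpp : p1 - p2 ≠ 0 := sub_ne_zero.mpr hp
  have hkey : A1 ^ (p1 - p2) = k2 / k1 * A2 ^ (q2 - q1) := by
    rw [hA1def, ← Real.rpow_mul hc.le, one_div, inv_mul_cancel₀ hpp, Real.rpow_one]
  have h1 : k1 * A1 ^ p1 * A2 ^ q1 = k2 * A1 ^ p2 * A2 ^ q2 := by
    have e1 : A1 ^ p1 = A1 ^ p2 * A1 ^ (p1 - p2) := by
      rw [← Real.rpow_add hA1]; ring_nf
    have e2 : A2 ^ (q2 - q1) = A2 ^ q2 / A2 ^ q1 := by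
      rw [Real.rpow_sub hA2]
    rw [e1, hkey, e2]
    field_simp
  refine ⟨hA1, div_pos hA2 hβ, mul_pos (div_pos hk5 hk4) hA2,
    mul_pos (div_pos hk5 hk6) hA2, ?_, ?_, ?_, ?_, ?_⟩
  · rw [h1]; ring
  · rw [h1]; field_simp; ring
  · field_simp; ring
  · field_simp; ring
  · field_simp; ring
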